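/- Let 𝒜 be a topological space and let π : ℝ × [0,1] → 𝒜 be a covering map such that π(x,y) = π(x',y') if and only if x − x' ∈ ℤ and y = y'. Set ∂_in𝒜 = π(ℝ × {0}) and ∂_out𝒜 = π(ℝ × {1}). Let P, P' : [0,1] → 𝒜 be continuous paths with P(0), P'(0) ∈ ∂_in𝒜 and P(1), P'(1) ∈ ∂_out𝒜, and let P̂, P̂' : [0,1] → ℝ × [0,1] be continuous lifts (π ∘ P̂ = P, π ∘ P̂' = P'). Define the winding number wind(P) as the first coordinate of P̂(1) minus the first coordinate of P̂(0) (this is independent of the choice of lift), and similarly wind(P'). If wind(P) + 1 < wind(P'), then P and P' cross each other: there exist s, t ∈ [0,1] such that P(s) = P'(t) and the initial segments do not coincide, i.e. P([0,s]) ≠ P'([0,t]). -/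

import Mathlib

open Real Set

private lemma sin_nonneg_exists (x : ℝ) (hx : 0 ≤ Real.sin x) :
    ∃ k : ℤ, x ∈ Set.Icc (2*(k:ℝ)*π) (2*(k:ℝ)*π + π) := by
  have h2 : (0:ℝ) < 2*π := by positivity
  refine ⟨⌊x / (2*π)⌋, ?_, ?_⟩
  · have := Int.floor_le (x / (2*π))
    calc 2*(⌊x / (2*π)⌋:ℝ)*π = (⌊x / (2*π)⌋:ℝ) * (2*π) := by ring
    _ ≤ (x / (2*π)) * (2*π) := by gcongr
    _ = x := by field_simp
  · by_contra hlt
    push_neg at hlt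
    set k : ℤ := ⌊x / (2*π)⌋ with hk
    have he : ((k+1:ℤ):ℝ)*(2*π) = 2*(k:ℝ)*π + 2*π := by push_cast; ring
    have hub : x < ((k+1:ℤ):ℝ)*(2*π) := by
      have := (div_lt_iff₀ h2).mp (Int.lt_floor_add_one (x / (2*π)))
      push_cast at this ⊢
      nlinarith
    have h1 : -π < x - ((k+1:ℤ):ℝ)*(2*π) := by rw [he]; linarith [Real.pi_pos]
    have h2' : x - ((k+1:ℤ):ℝ)*(2*π) < 0 := by linarith
    have hneg : Real.sin (x - ((k+1:ℤ):ℝ)*(2*π)) < 0 := Real.sin_neg_of_neg_of_neg_pi_lt h2' h1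
    rw [Real.sin_sub_int_mul_two_pi] at hneg
    linarith

private lemma conn_sin_nonneg {C : Set ℝ} (hC : IsPreconnected C)
    (hs : ∀ x ∈ C, 0 ≤ Real.sin x) (k : ℤ) {a b : ℝ} (ha : a ∈ C) (hb : b ∈ C)
    (hak : a ∈ Set.Icc (2*(k:ℝ)*π) (2*(k:ℝ)*π + π)) :
    b ∈ Set.Icc (2*(k:ℝ)*π) (2*(k:ℝ)*π + π) := by
  obtain ⟨k', hk'⟩ := sin_nonneg_exists b (hs b hb)
  have hoc : C.OrdConnected := hC.ordConnected
  rcases lt_trichotomy k' k with h | h | h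
  · exfalso
    have hξC : 2*(k:ℝ)*π - π/2 ∈ C := by
      refine hoc.out hb ha ⟨?_, ?_⟩
      · have h1 : (k':ℝ) + 1 ≤ k := by exact_mod_cast h
        have hmul := mul_le_mul_of_nonneg_right h1 Real.pi_pos.le
        have := hk'.2
        linarith [Real.pi_pos]
      · linarith [Real.pi_pos, hak.1]
    have hsx : Real.sin (2*(k:ℝ)*π - π/2) = -1 := by
      have he : 2*(k:ℝ)*π - π/2 = -(π/2) + (k:ℝ) * (2*π) := by ring
      rw [he, Real.sin_add_int_mul_two_pi, Real.sin_neg, Real.sin_pi_div_two]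
    linarith [hs _ hξC]
  · rw [h] at hk'; exact hk'
  · exfalso
    have hξC : 2*(k:ℝ)*π + π + π/2 ∈ C := by
      refine hoc.out ha hb ⟨?_, ?_⟩
      · linarith [Real.pi_pos, hak.2]
      · have h1 : (k:ℝ) + 1 ≤ k' := by exact_mod_cast h
        have hmul := mul_le_mul_of_nonneg_right h1 Real.pi_pos.le
        have := hk'.1
        linarith [Real.pi_pos]
    have hsx : Real.sin (2*(k:ℝ)*π + π + π/2) = -1 := by
      have he : 2*(k:ℝ)*π + π + π/2 = -(π/2) + ((k+1:ℤ):ℝ) * (2*π) := by push_cast; ring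
      rw [he, Real.sin_add_int_mul_two_pi, Real.sin_neg, Real.sin_pi_div_two]
    linarith [hs _ hξC]

private lemma conn_sin_nonpos {C : Set ℝ} (hC : IsPreconnected C)
    (hs : ∀ x ∈ C, Real.sin x ≤ 0) (k : ℤ) {a b : ℝ} (ha : a ∈ C) (hb : b ∈ C)
    (hak : a ∈ Set.Icc (2*(k:ℝ)*π - π) (2*(k:ℝ)*π)) :
    b ∈ Set.Icc (2*(k:ℝ)*π - π) (2*(k:ℝ)*π) := by
  have hC' : IsPreconnected (Neg.neg '' C) := hC.image _ (continuous_neg.continuousOn)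
  have hs' : ∀ x ∈ Neg.neg '' C, 0 ≤ Real.sin x := by
    rintro x ⟨y, hy, rfl⟩
    rw [Real.sin_neg]
    linarith [hs y hy]
  have h := conn_sin_nonneg hC' hs' (-k) (a := -a) (b := -b)
    ⟨a, ha, rfl⟩ ⟨b, hb, rfl⟩ ⟨by push_cast; linarith [hak.2], by push_cast; linarith [hak.1]⟩
  constructor
  · have := h.2; push_cast at this; linarith
  · have := h.1; push_cast at this; linarith

set_option maxHeartbeats 2000000 in
private lemma deg_crossing
    (f g : unitInterval → ℝ × unitInterval)
    (hf : Continuous f) (hg : Continuous g)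
    (hf0 : ((f 0).2 : ℝ) = 0) (hf1 : ((f 1).2 : ℝ) = 1)
    (hg0 : ((g 0).2 : ℝ) = 0) (hg1 : ((g 1).2 : ℝ) = 1)
    (n : ℤ) (hn1 : (f 1).1 - (g 1).1 < (n:ℝ)) (hn2 : (n:ℝ) < (f 0).1 - (g 0).1) :
    ∃ s t : unitInterval, (f s).1 = (g t).1 + (n:ℝ) ∧ (f s).2 = (g t).2 := by
  by_contra hcon
  push_neg at hcon
  set orig : unitInterval × unitInterval → ℂ :=
    fun q => (((f q.1).1 - (g q.2).1 - (n:ℝ) : ℝ) : ℂ) +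
      ((((f q.1).2 : ℝ) - ((g q.2).2 : ℝ) : ℝ) : ℂ) * Complex.I with horig
  have horigre : ∀ q, (orig q).re = (f q.1).1 - (g q.2).1 - (n:ℝ) := by
    intro q; simp [horig]
  have horigim : ∀ q, (orig q).im = ((f q.1).2 : ℝ) - ((g q.2).2 : ℝ) := by
    intro q; simp [horig]
  have c1 : Continuous fun q : unitInterval × unitInterval => (f q.1).1 :=
    (hf.comp continuous_fst).fst
  have c2 : Continuous fun q : unitInterval × unitInterval => ((f q.1).2 : ℝ) :=
    continuous_subtype_val.comp (hf.comp continuous_fst).snd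
  have d1 : Continuous fun q : unitInterval × unitInterval => (g q.2).1 :=
    (hg.comp continuous_snd).fst
  have d2 : Continuous fun q : unitInterval × unitInterval => ((g q.2).2 : ℝ) :=
    continuous_subtype_val.comp (hg.comp continuous_snd).snd
  have hcorig : Continuous orig := by
    apply Continuous.add
    · exact Complex.continuous_ofReal.comp ((c1.sub d1).sub continuous_const)
    · exact (Complex.continuous_ofReal.comp (c2.sub d2)).mul continuous_const
  have horigne : ∀ q, orig q ≠ 0 := by
    intro q hq
    have hre := congrArg Complex.re hq
    have him := congrArg Complex.im hq
    rw [horigre] at hre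
    rw [horigim] at him
    simp at hre him
    exact hcon q.1 q.2 (by linarith) (Subtype.ext (by linarith))
  have habs : ∀ q, 0 < norm (orig q) := fun q => norm_pos_iff.mpr (horigne q)
  obtain ⟨qm, -, hqm⟩ := isCompact_univ.exists_isMinOn ⟨(0,0), trivial⟩
    ((continuous_norm.comp hcorig).continuousOn)
  set ε : ℝ := norm (orig qm) with hεdef
  have hε : 0 < ε := habs qm
  have hεle : ∀ q, ε ≤ norm (orig q) := fun q => hqm (mem_univ q)
  -- extend to the plane
  set pr : ℝ × ℝ → unitInterval × unitInterval :=
    fun x => (projIcc 0 1 zero_le_one x.1, projIcc 0 1 zero_le_one x.2) with hprdef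
  have hprc : Continuous pr :=
    (continuous_projIcc.comp continuous_fst).prodMk (continuous_projIcc.comp continuous_snd)
  have hpru : UniformContinuous pr :=
    (((LipschitzWith.projIcc zero_le_one).uniformContinuous).comp uniformContinuous_fst).prodMk
      (((LipschitzWith.projIcc zero_le_one).uniformContinuous).comp uniformContinuous_snd)
  set D : ℝ × ℝ → ℂ := fun x => orig (pr x) with hDdef
  have hDu : UniformContinuous D :=
    (CompactSpace.uniformContinuous_of_continuous hcorig).comp hpru
  have hDc : Continuous D := hcorig.comp hprc
  have hDne : ∀ x, D x ≠ 0 := fun x => horigne (pr x)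
  have hDabs : ∀ x, ε ≤ norm (D x) := fun x => hεle (pr x)
  have hD_on_I : ∀ q : unitInterval × unitInterval, D ((q.1 : ℝ), (q.2 : ℝ)) = orig q := by
    intro q
    simp only [hDdef, hprdef, projIcc_val]
  obtain ⟨δ, hδ, hδ'⟩ := Metric.uniformContinuous_iff.mp hDu ε hε
  set N : ℕ := ⌈2/δ⌉₊ + 1 with hNdef
  have hNpos : (0:ℝ) < N := by positivity
  have hNδ : 1/(N:ℝ) < δ := by
    have h1 : 2/δ ≤ (N:ℝ) := le_trans (Nat.le_ceil _) (by exact_mod_cast Nat.le_succ _)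
    have h2 : 2 ≤ (N:ℝ) * δ := by
      have := (div_le_iff₀ hδ).mp h1
      linarith
    rw [div_lt_iff₀ hNpos]
    nlinarith
  set c : ℕ → ℝ × ℝ → ℝ × ℝ := fun j x => ((j:ℝ)/(N:ℝ)) • x with hcdef
  have hc0 : ∀ x, c 0 x = 0 := by intro x; simp [hcdef]
  have hcN : ∀ x, c N x = x := by
    intro x
    simp only [hcdef, div_self (ne_of_gt hNpos)]
    exact one_smul _ _
  have hcdist : ∀ (j : ℕ) (x : ℝ × ℝ), ‖x‖ ≤ 1 →
      dist (D (c (j+1) x)) (D (c j x)) < ε := by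
    intro j x hx
    apply hδ'
    have : c (j+1) x - c j x = ((1:ℝ)/(N:ℝ)) • x := by
      simp only [hcdef, ← sub_smul]
      congr 1
      push_cast
      field_simp
      ring
    rw [dist_eq_norm, this, norm_smul]
    have : ‖(1:ℝ)/(N:ℝ)‖ = 1/(N:ℝ) := by
      rw [Real.norm_eq_abs, abs_of_pos (by positivity)]
    rw [this]
    calc 1/(N:ℝ) * ‖x‖ ≤ 1/(N:ℝ) * 1 := by
          apply mul_le_mul_of_nonneg_left hx (by positivity)
    _ = 1/(N:ℝ) := mul_one _
    _ < δ := hNδ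
  have hratio : ∀ (j : ℕ) (x : ℝ × ℝ), ‖x‖ ≤ 1 →
      0 < (D (c (j+1) x) / D (c j x)).re := by
    intro j x hx
    set a : ℂ := D (c (j+1) x)
    set b : ℂ := D (c j x)
    have hb : b ≠ 0 := hDne _
    have h1 : norm (a - b) < ε := by
      rw [← Complex.dist_eq]; exact hcdist j x hx
    have hbpos : 0 < norm b := norm_pos_iff.mpr hb
    have hw : norm (1 - a/b) < 1 := by
      have he : (1:ℂ) - a/b = (b - a)/b := by field_simp
      rw [he, norm_div, div_lt_one hbpos]
      calc norm (b - a) = norm (a - b) := by rw [← norm_neg]; ring_nf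
      _ < ε := h1
      _ ≤ norm b := hDabs _
    have h2 : (1 - a/b).re ≤ norm (1 - a/b) := Complex.re_le_norm _
    have h3 : (1 - a/b).re = 1 - (a/b).re := by simp
    linarith
  set θ : ℝ × ℝ → ℝ :=
    fun x => (D 0).arg + ∑ j ∈ Finset.range N, (D (c (j+1) x) / D (c j x)).arg with hθdef
  have key : ∀ (x : ℝ × ℝ) (m : ℕ),
      Complex.exp (((D 0).arg + ∑ j ∈ Finset.range m, (D (c (j+1) x) / D (c j x)).arg : ℝ)
        * Complex.I) = D (c m x) / ((norm (D (c m x)) : ℝ) : ℂ) := by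
    intro x m
    induction m with
    | zero =>
      simp only [Finset.range_zero, Finset.sum_empty, add_zero, hc0]
      rw [eq_div_iff (by
        exact_mod_cast Complex.ofReal_ne_zero.mpr (ne_of_gt (norm_pos_iff.mpr (hDne 0))))]
      rw [mul_comm]
      exact Complex.norm_mul_exp_arg_mul_I (D 0)
    | succ m ih =>
      rw [Finset.sum_range_succ, ← add_assoc, Complex.ofReal_add, add_mul, Complex.exp_add, ih]
      have hrne : D (c (m+1) x) / D (c m x) ≠ 0 := div_ne_zero (hDne _) (hDne _)
      have hexp_r : Complex.exp (((D (c (m+1) x) / D (c m x)).arg : ℝ) * Complex.I)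
          = (D (c (m+1) x) / D (c m x)) /
            ((norm (D (c (m+1) x) / D (c m x)) : ℝ) : ℂ) := by
        rw [eq_div_iff (Complex.ofReal_ne_zero.mpr (ne_of_gt (norm_pos_iff.mpr hrne))), mul_comm]
        exact Complex.norm_mul_exp_arg_mul_I _
      rw [hexp_r]
      rw [norm_div, Complex.ofReal_div]
      have h1 : D (c m x) ≠ 0 := hDne _
      have h2 : D (c (m+1) x) ≠ 0 := hDne _
      have h3 : ((norm (D (c m x)) : ℝ) : ℂ) ≠ 0 :=
        Complex.ofReal_ne_zero.mpr (ne_of_gt (norm_pos_iff.mpr h1))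
      have h4 : ((norm (D (c (m+1) x)) : ℝ) : ℂ) ≠ 0 :=
        Complex.ofReal_ne_zero.mpr (ne_of_gt (norm_pos_iff.mpr h2))
      field_simp
  have hθ_exp : ∀ x : ℝ × ℝ, Complex.exp ((θ x : ℝ) * Complex.I)
      = D x / ((norm (D x) : ℝ) : ℂ) := by
    intro x
    have := key x N
    rw [hcN] at this
    exact this
  set emb : unitInterval × unitInterval → ℝ × ℝ := fun q => ((q.1 : ℝ), (q.2 : ℝ)) with hembdef
  have hembc : Continuous emb :=
    (continuous_subtype_val.comp continuous_fst).prodMk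
      (continuous_subtype_val.comp continuous_snd)
  have hembnorm : ∀ q : unitInterval × unitInterval, ‖emb q‖ ≤ 1 := by
    intro q
    rw [Prod.norm_def]
    apply max_le
    · rw [Real.norm_eq_abs, abs_le]; exact ⟨by linarith [q.1.2.1], q.1.2.2⟩
    · rw [Real.norm_eq_abs, abs_le]; exact ⟨by linarith [q.2.2.1], q.2.2.2⟩
  set θsq : unitInterval × unitInterval → ℝ := fun q => θ (emb q) with hθsqdef
  have hθsqc : Continuous θsq := by
    apply Continuous.add continuous_const
    apply continuous_finset_sum
    intro j _
    rw [continuous_iff_continuousAt]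
    intro q
    have hinner : Continuous fun q : unitInterval × unitInterval =>
        D (c (j+1) (emb q)) / D (c j (emb q)) := by
      apply Continuous.div
      · exact hDc.comp (by simp only [hcdef]; fun_prop)
      · exact hDc.comp (by simp only [hcdef]; fun_prop)
      · intro x; exact hDne _
    have harg : ContinuousAt Complex.arg
        ((fun q : unitInterval × unitInterval => D (c (j+1) (emb q)) / D (c j (emb q))) q) :=
      Complex.continuousAt_arg
        (Complex.mem_slitPlane_iff.mpr (Or.inl (hratio j (emb q) (hembnorm q))))
    exact ContinuousAt.comp (g := Complex.arg)
      (f := fun q : unitInterval × unitInterval => D (c (j+1) (emb q)) / D (c j (emb q)))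
      (x := q) harg hinner.continuousAt
  have hpolar : ∀ q : unitInterval × unitInterval,
      orig q = ((norm (orig q) : ℝ) : ℂ) * Complex.exp ((θsq q : ℝ) * Complex.I) := by
    intro q
    have := hθ_exp (emb q)
    rw [hembdef] at this
    simp only [hD_on_I] at this
    rw [hθsqdef, hembdef]
    rw [this]
    have h3 : ((norm (orig q) : ℝ) : ℂ) ≠ 0 :=
      Complex.ofReal_ne_zero.mpr (ne_of_gt (habs q))
    field_simp
  have hsin : ∀ q : unitInterval × unitInterval,
      ((f q.1).2 : ℝ) - ((g q.2).2 : ℝ) = norm (orig q) * Real.sin (θsq q) := by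
    intro q
    have := congrArg Complex.im (hpolar q)
    rw [horigim] at this
    rw [this]
    simp [Complex.mul_im, Complex.exp_ofReal_mul_I_im, Complex.exp_ofReal_mul_I_re]
  have hcos : ∀ q : unitInterval × unitInterval,
      (f q.1).1 - (g q.2).1 - (n:ℝ) = norm (orig q) * Real.cos (θsq q) := by
    intro q
    have := congrArg Complex.re (hpolar q)
    rw [horigre] at this
    rw [this]
    simp [Complex.mul_re, Complex.exp_ofReal_mul_I_im, Complex.exp_ofReal_mul_I_re]
  -- sign helpers
  have hsin_nonneg : ∀ q : unitInterval × unitInterval,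
      0 ≤ ((f q.1).2:ℝ) - ((g q.2).2:ℝ) → 0 ≤ Real.sin (θsq q) := by
    intro q h
    rw [hsin q] at h
    by_contra hneg
    push_neg at hneg
    nlinarith [habs q]
  have hsin_nonpos : ∀ q : unitInterval × unitInterval,
      ((f q.1).2:ℝ) - ((g q.2).2:ℝ) ≤ 0 → Real.sin (θsq q) ≤ 0 := by
    intro q h
    rw [hsin q] at h
    by_contra hneg
    push_neg at hneg
    nlinarith [habs q]
  -- corner (0,0)
  have hs00 : Real.sin (θsq (0,0)) = 0 := by
    have h : ((f 0).2:ℝ) - ((g 0).2:ℝ)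
        = norm (orig (0,0)) * Real.sin (θsq (0,0)) := hsin (0,0)
    rw [hf0, hg0] at h
    have h' : norm (orig (0,0)) * Real.sin (θsq (0,0)) = 0 := by linarith
    exact (mul_eq_zero.mp h').resolve_left (ne_of_gt (habs (0,0)))
  have hc00 : 0 < Real.cos (θsq (0,0)) := by
    have h : (f 0).1 - (g 0).1 - (n:ℝ)
        = norm (orig (0,0)) * Real.cos (θsq (0,0)) := hcos (0,0)
    by_contra hng
    push_neg at hng
    nlinarith [habs (0,0)]
  obtain ⟨j0, hj0⟩ := Real.sin_eq_zero_iff.mp hs00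
  obtain ⟨k₀, hk₀⟩ : ∃ k₀ : ℤ, θsq (0,0) = 2*(k₀:ℝ)*π := by
    rcases Int.even_or_odd j0 with ⟨k, hk⟩ | ⟨k, hk⟩
    · exact ⟨k, by rw [← hj0, hk]; push_cast; ring⟩
    · exfalso
      have he : θsq (0,0) = π + (k:ℝ)*(2*π) := by rw [← hj0, hk]; push_cast; ring
      have hco : Real.cos (θsq (0,0)) = -1 := by
        have : Real.cos (θsq (0,0)) = Real.cos (π + (k:ℤ)*(2*π)) := by rw [← he]
        rw [this, Real.cos_add_int_mul_two_pi, Real.cos_pi]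
      linarith
  -- edge t = 0
  have edge1c : Continuous fun s : unitInterval => θsq (s, 0) :=
    hθsqc.comp (continuous_id.prodMk continuous_const)
  have hA1 : θsq (1,0) ∈ Set.Icc (2*(k₀:ℝ)*π) (2*(k₀:ℝ)*π + π) := by
    refine conn_sin_nonneg (isPreconnected_range edge1c) ?_ k₀ ⟨0, rfl⟩ ⟨1, rfl⟩ ?_
    · rintro x ⟨s, rfl⟩
      exact hsin_nonneg (s, 0) (by rw [hg0]; linarith [(f s).2.2.1])
    · exact (by rw [hk₀]; exact ⟨le_rfl, by linarith [Real.pi_pos]⟩ :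
        θsq (0,0) ∈ Set.Icc (2*(k₀:ℝ)*π) (2*(k₀:ℝ)*π + π))
  -- edge s = 1
  have edge2c : Continuous fun t : unitInterval => θsq (1, t) :=
    hθsqc.comp (continuous_const.prodMk continuous_id)
  have hA2 : θsq (1,1) ∈ Set.Icc (2*(k₀:ℝ)*π) (2*(k₀:ℝ)*π + π) := by
    refine conn_sin_nonneg (isPreconnected_range edge2c) ?_ k₀ ⟨0, rfl⟩ ⟨1, rfl⟩ hA1
    rintro x ⟨t, rfl⟩
    exact hsin_nonneg (1, t) (by rw [hf1]; linarith [(g t).2.2.2])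
  -- corner (1,1)
  have hs11 : Real.sin (θsq (1,1)) = 0 := by
    have h : ((f 1).2:ℝ) - ((g 1).2:ℝ)
        = norm (orig (1,1)) * Real.sin (θsq (1,1)) := hsin (1,1)
    rw [hf1, hg1] at h
    have h' : norm (orig (1,1)) * Real.sin (θsq (1,1)) = 0 := by linarith
    exact (mul_eq_zero.mp h').resolve_left (ne_of_gt (habs (1,1)))
  have hc11 : Real.cos (θsq (1,1)) < 0 := by
    have h : (f 1).1 - (g 1).1 - (n:ℝ)
        = norm (orig (1,1)) * Real.cos (θsq (1,1)) := hcos (1,1)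
    by_contra hng
    push_neg at hng
    nlinarith [habs (1,1)]
  obtain ⟨j1, hj1⟩ := Real.sin_eq_zero_iff.mp hs11
  have hθ11 : θsq (1,1) = 2*(k₀:ℝ)*π + π := by
    have hπ := Real.pi_pos
    have e1 : (2*k₀:ℝ) ≤ (j1:ℝ) := by
      have h1 : (2*(k₀:ℝ))*π ≤ (j1:ℝ)*π := by rw [hj1]; linarith [hA2.1]
      exact (mul_le_mul_iff_of_pos_right hπ).mp h1
    have e2 : (j1:ℝ) ≤ 2*(k₀:ℝ) + 1 := by
      have h1 : (j1:ℝ)*π ≤ (2*(k₀:ℝ) + 1)*π := by rw [hj1]; nlinarith [hA2.2]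
      exact (mul_le_mul_iff_of_pos_right hπ).mp h1
    have e1' : 2*k₀ ≤ j1 := by exact_mod_cast e1
    have e2' : j1 ≤ 2*k₀ + 1 := by exact_mod_cast e2
    have : j1 = 2*k₀ ∨ j1 = 2*k₀ + 1 := by omega
    rcases this with h | h
    · exfalso
      have : θsq (1,1) = ((k₀:ℤ):ℝ)*(2*π) := by rw [← hj1, h]; push_cast; ring
      rw [this, Real.cos_int_mul_two_pi] at hc11
      linarith
    · rw [← hj1, h]; push_cast; ring
  -- edge t = 1
  have edge3c : Continuous fun s : unitInterval => θsq (s, 1) :=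
    hθsqc.comp (continuous_id.prodMk continuous_const)
  have hA3 : θsq (0,1) ∈ Set.Icc (2*((k₀+1:ℤ):ℝ)*π - π) (2*((k₀+1:ℤ):ℝ)*π) := by
    refine conn_sin_nonpos (isPreconnected_range edge3c) ?_ (k₀+1) ⟨1, rfl⟩ ⟨0, rfl⟩ ?_
    · rintro x ⟨s, rfl⟩
      exact hsin_nonpos (s, 1) (by rw [hg1]; linarith [(f s).2.2.2])
    · exact (by
        constructor
        · rw [hθ11]; push_cast; linarith [Real.pi_pos]
        · rw [hθ11]; push_cast; linarith [Real.pi_pos] :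
        θsq (1,1) ∈ Set.Icc (2*((k₀+1:ℤ):ℝ)*π - π) (2*((k₀+1:ℤ):ℝ)*π))
  -- edge s = 0
  have edge4c : Continuous fun t : unitInterval => θsq (0, t) :=
    hθsqc.comp (continuous_const.prodMk continuous_id)
  have hA4 : θsq (0,0) ∈ Set.Icc (2*((k₀+1:ℤ):ℝ)*π - π) (2*((k₀+1:ℤ):ℝ)*π) := by
    refine conn_sin_nonpos (isPreconnected_range edge4c) ?_ (k₀+1) ⟨1, rfl⟩ ⟨0, rfl⟩ hA3
    rintro x ⟨t, rfl⟩
    exact hsin_nonpos (0, t) (by rw [hf0]; linarith [(g t).2.2.1])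
  have hfin := hA4.1
  rw [hk₀] at hfin
  push_cast at hfin
  linarith [Real.pi_pos]

set_option maxHeartbeats 1000000 in
/-- **Crossing of paths with different winding numbers in an annulus.**
If `𝒜` is a topological space covered by `ℝ × [0,1]` via a covering map `p` whose deck
transformations are integer translations in the first coordinate, and `P, P'` are paths from the
inner boundary `p(ℝ × {0})` to the outer boundary `p(ℝ × {1})` whose winding numbers (defined via
continuous lifts) satisfy `wind(P) + 1 < wind(P')`, then `P` and `P'` cross each other: they meet
at a point such that their initial segments up to that point do not coincide. -/
theorem confluence_winding_crossing {A : Type*} [TopologicalSpace A]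
    (p : ℝ × unitInterval → A)
    (hcov : IsCoveringMap p)
    (hdeck : ∀ (x x' : ℝ) (y y' : unitInterval),
      p (x, y) = p (x', y') ↔ (∃ n : ℤ, x - x' = (n : ℝ)) ∧ y = y')
    (P P' : unitInterval → A) (hP : Continuous P) (hP' : Continuous P')
    (hP0 : P 0 ∈ Set.range fun x : ℝ => p (x, 0))
    (hP'0 : P' 0 ∈ Set.range fun x : ℝ => p (x, 0))
    (hP1 : P 1 ∈ Set.range fun x : ℝ => p (x, 1))
    (hP'1 : P' 1 ∈ Set.range fun x : ℝ => p (x, 1))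
    (Ph P'h : unitInterval → ℝ × unitInterval)
    (hPhCont : Continuous Ph) (hPhLift : p ∘ Ph = P)
    (hP'hCont : Continuous P'h) (hP'hLift : p ∘ P'h = P')
    (hwind : (Ph 1).1 - (Ph 0).1 + 1 < (P'h 1).1 - (P'h 0).1) :
    ∃ s t : unitInterval, P s = P' t ∧
      P '' {u | u ≤ s} ≠ P' '' {u | u ≤ t} := by
  by_contra hcon
  push_neg at hcon
  -- hcon : ∀ s t, P s = P' t → P '' {u | u ≤ s} = P' '' {u | u ≤ t}
  have hPheq : ∀ u, p (Ph u) = P u := fun u => congrFun hPhLift u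
  have hP'heq : ∀ v, p (P'h v) = P' v := fun v => congrFun hP'hLift v
  have hpp : ∀ w : ℝ × unitInterval, p w = p (w.1, w.2) := fun w => by rw [Prod.mk.eta]
  have hI0 : ∀ w : unitInterval, (0:unitInterval) ≤ w := fun w => w.2.1
  have cross_iff : ∀ u v : unitInterval, P u = P' v ↔
      ((∃ m : ℤ, (Ph u).1 - (P'h v).1 = (m:ℝ)) ∧ (Ph u).2 = (P'h v).2) := by
    intro u v
    rw [← hPheq u, ← hP'heq v, hpp (Ph u), hpp (P'h v)]
    exact hdeck _ _ _ _
  -- boundary heights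
  have hPh0 : ((Ph 0).2 : ℝ) = 0 := by
    obtain ⟨x, hx⟩ := hP0
    rw [← hPheq 0, hpp (Ph 0)] at hx
    have h := (hdeck x (Ph 0).1 0 (Ph 0).2).mp hx
    rw [← h.2]
    norm_num
  have hPh1 : ((Ph 1).2 : ℝ) = 1 := by
    obtain ⟨x, hx⟩ := hP1
    rw [← hPheq 1, hpp (Ph 1)] at hx
    have h := (hdeck x (Ph 1).1 1 (Ph 1).2).mp hx
    rw [← h.2]
    norm_num
  have hP'h0 : ((P'h 0).2 : ℝ) = 0 := by
    obtain ⟨x, hx⟩ := hP'0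
    rw [← hP'heq 0, hpp (P'h 0)] at hx
    have h := (hdeck x (P'h 0).1 0 (P'h 0).2).mp hx
    rw [← h.2]
    norm_num
  have hP'h1 : ((P'h 1).2 : ℝ) = 1 := by
    obtain ⟨x, hx⟩ := hP'1
    rw [← hP'heq 1, hpp (P'h 1)] at hx
    have h := (hdeck x (P'h 1).1 1 (P'h 1).2).mp hx
    rw [← h.2]
    norm_num
  -- a first crossing via the degree argument
  obtain ⟨σ₁, τ₁, hcr1, hcr2⟩ := deg_crossing Ph P'h hPhCont hP'hCont hPh0 hPh1 hP'h0 hP'h1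
    (⌊(Ph 1).1 - (P'h 1).1⌋ + 1)
    (by push_cast; exact Int.lt_floor_add_one _)
    (by push_cast; linarith [Int.floor_le ((Ph 1).1 - (P'h 1).1), hwind])
  have hScross1 : P σ₁ = P' τ₁ :=
    (cross_iff σ₁ τ₁).mpr ⟨⟨⌊(Ph 1).1 - (P'h 1).1⌋ + 1, by push_cast at hcr1 ⊢; linarith⟩, hcr2⟩
  -- the crossing set, described by continuous equations
  have e1 : Continuous fun q : unitInterval × unitInterval => ((Ph q.1).2 : ℝ) :=
    continuous_subtype_val.comp (hPhCont.comp continuous_fst).snd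
  have e2 : Continuous fun q : unitInterval × unitInterval => ((P'h q.2).2 : ℝ) :=
    continuous_subtype_val.comp (hP'hCont.comp continuous_snd).snd
  have e3 : Continuous fun q : unitInterval × unitInterval => (Ph q.1).1 :=
    (hPhCont.comp continuous_fst).fst
  have e4 : Continuous fun q : unitInterval × unitInterval => (P'h q.2).1 :=
    (hP'hCont.comp continuous_snd).fst
  set S : Set (unitInterval × unitInterval) :=
    {q | ((Ph q.1).2 : ℝ) = ((P'h q.2).2 : ℝ) ∧
      Real.cos (2*Real.pi*((Ph q.1).1 - (P'h q.2).1)) = 1} with hSdef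
  have hS_iff : ∀ q : unitInterval × unitInterval, q ∈ S ↔ P q.1 = P' q.2 := by
    intro q
    rw [cross_iff]
    constructor
    · rintro ⟨h1, h2⟩
      obtain ⟨m, hm⟩ := (Real.cos_eq_one_iff _).mp h2
      refine ⟨⟨m, ?_⟩, Subtype.ext h1⟩
      apply mul_left_cancel₀ (show (2*Real.pi) ≠ 0 by positivity)
      linarith
    · rintro ⟨⟨m, hm⟩, h2⟩
      refine ⟨congrArg Subtype.val h2, ?_⟩
      rw [hm]
      exact (Real.cos_eq_one_iff _).mpr ⟨m, by ring⟩
  have hSclosed : IsClosed S :=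
    (isClosed_eq e1 e2).inter
      (isClosed_eq (Real.continuous_cos.comp (continuous_const.mul (e3.sub e4))) continuous_const)
  have hSne : S.Nonempty := ⟨(σ₁, τ₁), (hS_iff _).mpr hScross1⟩
  -- P 0 = P' 0
  obtain ⟨q1, hq1S, hq1min⟩ := hSclosed.isCompact.exists_isMinOn hSne
    (continuous_subtype_val.comp continuous_fst).continuousOn
  set S1 : Set (unitInterval × unitInterval) := S ∩ {q | q.1 = q1.1} with hS1def
  have hS1closed : IsClosed S1 :=
    hSclosed.inter (isClosed_eq continuous_fst continuous_const)
  obtain ⟨q2, ⟨hq2S, hq2fst⟩, hq2min⟩ := hS1closed.isCompact.exists_isMinOn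
    ⟨q1, hq1S, rfl⟩ (continuous_subtype_val.comp continuous_snd).continuousOn
  have himg1 := hcon q2.1 q2.2 ((hS_iff q2).mp hq2S)
  have hmem : P' 0 ∈ P' '' {v | v ≤ q2.2} := ⟨0, hI0 _, rfl⟩
  rw [← himg1] at hmem
  obtain ⟨u0, hu0, hu02⟩ := hmem
  have hu0S : ((u0, (0:unitInterval)) : unitInterval × unitInterval) ∈ S := (hS_iff _).mpr hu02
  have hueq : u0 = q2.1 := by
    refine le_antisymm hu0 ?_
    rw [hq2fst]
    exact Subtype.coe_le_coe.mp (hq1min hu0S)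
  have hq20 : ((q2.1, (0:unitInterval)) : unitInterval × unitInterval) ∈ S := hueq ▸ hu0S
  have ht0 : q2.2 = 0 := by
    refine le_antisymm ?_ (hI0 _)
    exact Subtype.coe_le_coe.mp (hq2min ⟨hq20, hq2fst⟩)
  have hv0 : {v : unitInterval | v ≤ q2.2} = {0} := by
    rw [ht0]
    ext v
    simp only [Set.mem_setOf_eq, Set.mem_singleton_iff]
    exact ⟨fun h => le_antisymm h (hI0 v), fun h => h ▸ le_refl _⟩
  have hP00 : P 0 = P' 0 := by
    have h0mem : P 0 ∈ P '' {u | u ≤ q2.1} := ⟨0, hI0 _, rfl⟩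
    rw [himg1, hv0, Set.image_singleton] at h0mem
    exact h0mem
  obtain ⟨k, hk⟩ : ∃ k : ℤ, (Ph 0).1 - (P'h 0).1 = (k:ℝ) := ((cross_iff 0 0).mp hP00).1
  -- a crossing with offset k - 1
  obtain ⟨σ, τ, hcr1', hcr2'⟩ := deg_crossing Ph P'h hPhCont hP'hCont hPh0 hPh1 hP'h0 hP'h1
    (k - 1)
    (by push_cast; linarith)
    (by push_cast; linarith)
  -- the set of "bad" crossings (offset ≠ k)
  set Sb : Set (unitInterval × unitInterval) :=
    S ∩ {q | 1 ≤ |(Ph q.1).1 - (P'h q.2).1 - (k:ℝ)|} with hSbdef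
  have hSbclosed : IsClosed Sb :=
    hSclosed.inter (isClosed_le continuous_const ((e3.sub e4).sub continuous_const).abs)
  have hSbne : Sb.Nonempty := by
    refine ⟨(σ, τ), (hS_iff _).mpr ((cross_iff _ _).mpr
      ⟨⟨k - 1, by push_cast at hcr1' ⊢; linarith⟩, hcr2'⟩), ?_⟩
    show 1 ≤ |(Ph σ).1 - (P'h τ).1 - (k:ℝ)|
    have hval : (Ph σ).1 - (P'h τ).1 - (k:ℝ) = -1 := by push_cast at hcr1' ⊢; linarith
    rw [hval]
    norm_num
  obtain ⟨⟨s, t⟩, ⟨hqbS, hqbabs⟩, hqbmin⟩ := hSbclosed.isCompact.exists_isMinOn hSbne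
    ((continuous_subtype_val.comp continuous_fst).add
      (continuous_subtype_val.comp continuous_snd)).continuousOn
  have hcross_st : P s = P' t := (hS_iff _).mp hqbS
  obtain ⟨m, hm⟩ : ∃ m : ℤ, (Ph s).1 - (P'h t).1 = (m:ℝ) := ((cross_iff s t).mp hcross_st).1
  have hqbabs' : 1 ≤ |(Ph s).1 - (P'h t).1 - (k:ℝ)| := hqbabs
  have hmk : m ≠ k := by
    intro h
    rw [hm, h, sub_self, abs_zero] at hqbabs'
    linarith
  have small_cross : ∀ u v : unitInterval, P u = P' v → (u:ℝ) + (v:ℝ) < (s:ℝ) + (t:ℝ) →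
      Ph u = ((P'h v).1 + (k:ℝ), (P'h v).2) := by
    intro u v huv hsum
    obtain ⟨⟨m', hm'⟩, hh⟩ := (cross_iff u v).mp huv
    have hnb : ((u, v) : unitInterval × unitInterval) ∉ Sb := by
      intro hmemb
      have h' : (s:ℝ) + (t:ℝ) ≤ (u:ℝ) + (v:ℝ) := hqbmin hmemb
      linarith
    have habs' : ¬ (1 ≤ |(Ph u).1 - (P'h v).1 - (k:ℝ)|) :=
      fun hx => hnb ⟨(hS_iff _).mpr huv, hx⟩
    push_neg at habs'
    rw [hm'] at habs'
    have h2ab := abs_lt.mp habs'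
    have hm'k : m' = k := by
      have h3 : (-1:ℝ) < (m':ℝ) - (k:ℝ) := h2ab.1
      have h4 : (m':ℝ) - (k:ℝ) < 1 := h2ab.2
      have h3' : -1 < m' - k := by exact_mod_cast h3
      have h4' : m' - k < 1 := by exact_mod_cast h4
      omega
    refine Prod.ext_iff.mpr ⟨?_, ?_⟩
    · show (Ph u).1 = (P'h v).1 + (k:ℝ)
      rw [hm'k] at hm'
      linarith
    · exact hh
  have himg_st := hcon s t hcross_st
  -- endpoint-of-segment membership helper
  have endpoint : ∀ (F : unitInterval → ℝ × unitInterval), Continuous F →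
      ∀ (w : unitInterval) (C : Set (ℝ × unitInterval)), IsClosed C →
      (∀ v, v < w → F v ∈ C) → 0 < (w:ℝ) → F w ∈ C := by
    intro F hF w C hC hmemb hpos
    have hwcl : w ∈ closure {v : unitInterval | v < w} := by
      rw [Metric.mem_closure_iff]
      intro r hr
      have hminpos : 0 < min (r/2) ((w:ℝ)/2) := by positivity
      have hmem1 : (w:ℝ) - min (r/2) ((w:ℝ)/2) ∈ unitInterval := by
        constructor
        · have := min_le_right (r/2) ((w:ℝ)/2)
          linarith
        · have := w.2.2
          linarith
      refine ⟨⟨(w:ℝ) - min (r/2) ((w:ℝ)/2), hmem1⟩, ?_, ?_⟩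
      · show (⟨(w:ℝ) - min (r/2) ((w:ℝ)/2), hmem1⟩ : unitInterval) < w
        refine Subtype.coe_lt_coe.mp ?_
        show (w:ℝ) - min (r/2) ((w:ℝ)/2) < (w:ℝ)
        linarith
      · rw [Subtype.dist_eq]
        show |(w:ℝ) - ((w:ℝ) - min (r/2) ((w:ℝ)/2))| < r
        have heq : (w:ℝ) - ((w:ℝ) - min (r/2) ((w:ℝ)/2)) = min (r/2) ((w:ℝ)/2) := by ring
        rw [heq, abs_of_pos hminpos]
        have := min_le_left (r/2) ((w:ℝ)/2)
        linarith
    have h1 : F w ∈ F '' closure {v | v < w} := ⟨w, hwcl, rfl⟩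
    have h2 := image_closure_subset_closure_image hF h1
    have h3 : F '' {v | v < w} ⊆ C := by rintro _ ⟨v, hv, rfl⟩; exact hmemb v hv
    exact hC.closure_subset (closure_mono h3 h2)
  -- compactness of initial segments
  have hIic_cpt : ∀ w : unitInterval, IsCompact {v : unitInterval | v ≤ w} := by
    intro w
    have : {v : unitInterval | v ≤ w} = (fun v : unitInterval => (v:ℝ)) ⁻¹' Set.Iic (w:ℝ) := by
      ext v
      simp [Subtype.coe_le_coe]
    rw [this]
    exact (IsClosed.preimage continuous_subtype_val isClosed_Iic).isCompact
  set trk : ℝ × unitInterval → ℝ × unitInterval := fun w => (w.1 + (k:ℝ), w.2) with htrkdef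
  have htrkc : Continuous trk := (continuous_fst.add continuous_const).prodMk continuous_snd
  set trmk : ℝ × unitInterval → ℝ × unitInterval := fun w => (w.1 - (k:ℝ), w.2) with htrmkdef
  have htrmkc : Continuous trmk := (continuous_fst.sub continuous_const).prodMk continuous_snd
  -- Claim A : Ph s is a k-translate of a point of the initial segment of P'h
  have hA : Ph s ∈ trk '' (P'h '' {v | v ≤ t}) := by
    rcases eq_or_lt_of_le (s.2.1 : (0:ℝ) ≤ (s:ℝ)) with h0 | h0
    · have hs0 : s = 0 := Subtype.ext h0.symm
      refine ⟨P'h 0, ⟨0, hI0 _, rfl⟩, ?_⟩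
      rw [hs0]
      refine Prod.ext_iff.mpr ⟨?_, ?_⟩
      · show (P'h 0).1 + (k:ℝ) = (Ph 0).1
        linarith
      · exact Subtype.ext (by rw [hP'h0, hPh0])
    · apply endpoint Ph hPhCont s _ ((((hIic_cpt t).image hP'hCont).image htrkc).isClosed) ?_ h0
      intro u hu
      have hPu : P u ∈ P' '' {v | v ≤ t} := by
        rw [← himg_st]
        exact ⟨u, le_of_lt hu, rfl⟩
      obtain ⟨v, hv, hPv⟩ := hPu
      have hsum : (u:ℝ) + (v:ℝ) < (s:ℝ) + (t:ℝ) := by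
        have h1 : (u:ℝ) < s := Subtype.coe_lt_coe.mpr hu
        have h2 : (v:ℝ) ≤ t := Subtype.coe_le_coe.mpr hv
        linarith
      exact ⟨P'h v, ⟨v, hv, rfl⟩, (small_cross u v hPv.symm hsum).symm⟩
  obtain ⟨w1, ⟨v', hv', rfl⟩, hA_eq⟩ := hA
  -- Claim B : P'h t is a (-k)-translate of a point of the initial segment of Ph
  have hB : P'h t ∈ trmk '' (Ph '' {u | u ≤ s}) := by
    rcases eq_or_lt_of_le (t.2.1 : (0:ℝ) ≤ (t:ℝ)) with h0 | h0
    · have ht0' : t = 0 := Subtype.ext h0.symm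
      refine ⟨Ph 0, ⟨0, hI0 _, rfl⟩, ?_⟩
      rw [ht0']
      refine Prod.ext_iff.mpr ⟨?_, ?_⟩
      · show (Ph 0).1 - (k:ℝ) = (P'h 0).1
        linarith
      · exact Subtype.ext (by rw [hP'h0, hPh0])
    · apply endpoint P'h hP'hCont t _ ((((hIic_cpt s).image hPhCont).image htrmkc).isClosed) ?_ h0
      intro v hv
      have hPv : P' v ∈ P '' {u | u ≤ s} := by
        rw [himg_st]
        exact ⟨v, le_of_lt hv, rfl⟩
      obtain ⟨u, hu, hPu⟩ := hPv
      have hsum : (u:ℝ) + (v:ℝ) < (s:ℝ) + (t:ℝ) := by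
        have h1 : (u:ℝ) ≤ s := Subtype.coe_le_coe.mpr hu
        have h2 : (v:ℝ) < t := Subtype.coe_lt_coe.mpr hv
        linarith
      refine ⟨Ph u, ⟨u, hu, rfl⟩, ?_⟩
      rw [small_cross u v hPu hsum]
      refine Prod.ext_iff.mpr ⟨?_, rfl⟩
      show (P'h v).1 + (k:ℝ) - (k:ℝ) = (P'h v).1
      ring
  obtain ⟨w2, ⟨u, hu, rfl⟩, hB_eq⟩ := hB
  have hB12 := Prod.ext_iff.mp hB_eq
  have hBu1 : (Ph u).1 - (k:ℝ) = (P'h t).1 := hB12.1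
  have hBu2 : (Ph u).2 = (P'h t).2 := hB12.2
  have hus : u ≠ s := by
    intro h
    rw [h] at hBu1
    apply hmk
    have : (m:ℝ) = (k:ℝ) := by linarith
    exact_mod_cast this
  have hult : u < s := lt_of_le_of_ne hu hus
  have hcross_ut : P u = P' t := (cross_iff u t).mpr ⟨⟨k, by linarith⟩, hBu2⟩
  have himg_ut := hcon u t hcross_ut
  -- Claim B' applied at v'
  have hPv' : P' v' ∈ P '' {x | x ≤ u} := by
    rw [himg_ut]
    exact ⟨v', hv', rfl⟩
  obtain ⟨u2, hu2, hPu2⟩ := hPv'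
  have hsum2 : (u2:ℝ) + (v':ℝ) < (s:ℝ) + (t:ℝ) := by
    have h1 : (u2:ℝ) ≤ u := Subtype.coe_le_coe.mpr hu2
    have h2 : (u:ℝ) < s := Subtype.coe_lt_coe.mpr hult
    have h3 : (v':ℝ) ≤ t := Subtype.coe_le_coe.mpr hv'
    linarith
  have hx2 := small_cross u2 v' hPu2 hsum2
  have hPh_eq : Ph u2 = Ph s := by rw [hx2]; exact hA_eq
  have hcr : P u2 = P' t := by
    have h1 : P u2 = P s := by rw [← hPheq u2, ← hPheq s, hPh_eq]
    rw [h1]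
    exact hcross_st
  have hmemSb : ((u2, t) : unitInterval × unitInterval) ∈ Sb := by
    refine ⟨(hS_iff _).mpr hcr, ?_⟩
    show 1 ≤ |(Ph u2).1 - (P'h t).1 - (k:ℝ)|
    rw [hPh_eq]
    have hval : (Ph s).1 - (P'h t).1 - (k:ℝ) = ((m - k : ℤ):ℝ) := by push_cast; linarith
    rw [hval]
    have h1 : 1 ≤ |m - k| := Int.one_le_abs (sub_ne_zero.mpr hmk)
    exact_mod_cast h1
  have hfin : (s:ℝ) + (t:ℝ) ≤ (u2:ℝ) + (t:ℝ) := hqbmin hmemSb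
  have hlt : (u2:ℝ) < s := lt_of_le_of_lt (Subtype.coe_le_coe.mpr hu2) (Subtype.coe_lt_coe.mpr hult)
  linarith
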